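/- Let V be a vertex algebra, σ an automorphism with σ^T = 1, (W, Y_W) a right σ-twisted V-module, and z₀ any complex number. Define Y_W^{(z₀)}(v,x) = Y_W(v, x+z₀) for v ∈ V (which exists in Hom(W, W((x^{−1/T}))) since Y_W(v,x)w ∈ W((x^{−1/T}))). Then (W, Y_W^{(z₀)}) carries the structure of a right σ-twisted V-module. -/

import Mathlib

open scoped BigOperators

noncomputable section

/-- The generalized binomial coefficient `binom(a, n)` for `a : ℂ`, `n : ℕ`. -/
def cbinom (a : ℂ) (n : ℕ) : ℂ := (∏ i ∈ Finset.range n, (a - (i : ℂ))) / (n.factorial : ℂ)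

/-- The argument of a complex number normalized to lie in `[0, 2π)`. -/
def argB (ξ : ℂ) : ℝ := if 0 ≤ Complex.arg ξ then Complex.arg ξ else Complex.arg ξ + 2 * Real.pi

/-- The branch of the logarithm with `log ξ = ln |ξ| + i arg ξ`, `0 ≤ arg ξ < 2π`. -/
def logB (ξ : ℂ) : ℂ := (Real.log ‖ξ‖ : ℂ) + (argB ξ : ℂ) * Complex.I

/-- `ξ ^ α = e^{α log ξ}` with the chosen branch of `log`. -/
def bpow (ξ α : ℂ) : ℂ := Complex.exp (α * logB ξ)

/-- `e^{α π i}`. -/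
def epi (α : ℂ) : ℂ := Complex.exp (α * (Real.pi : ℂ) * Complex.I)

/-!  Formal series are recorded by the coefficient function `f : ℂ → ·`, where `f n` is the
coefficient of `x^{-n-1}`.  The following are the coefficients of the products with
`(x-z)^β`, `(z-x)^β`, `(x+z)^β`, `(z+x)^β` (with the expansion conventions
`(x ± ξ)^β = Σ_{j≥0} binom(β,j) (±ξ)^j x^{β-j}` and
`(ξ ± x)^β = Σ_{j≥0} binom(β,j) ξ^{β-j} (±x)^j`, where `ξ^γ` uses the chosen branch),
and of the substitution `f(x+z)`. -/

/-- Coefficient of `x^{-n-1}` in `(x-z)^β f(x)`. -/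
def mulXZ (z β : ℂ) (f : ℂ → ℂ) (n : ℂ) : ℂ :=
  ∑ᶠ i : ℕ, cbinom β i * (-z) ^ i * f (n + β - (i : ℂ))

/-- Coefficient of `x^{-n-1}` in `(z-x)^β f(x)`. -/
def mulZX (z β : ℂ) (f : ℂ → ℂ) (n : ℂ) : ℂ :=
  ∑ᶠ i : ℕ, cbinom β i * bpow z (β - (i : ℂ)) * (-1 : ℂ) ^ i * f (n + (i : ℂ))

/-- Coefficient of `x^{-n-1}` in `(x+z)^β f(x)`. -/
def mulXpZ (z β : ℂ) (f : ℂ → ℂ) (n : ℂ) : ℂ :=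
  ∑ᶠ i : ℕ, cbinom β i * z ^ i * f (n + β - (i : ℂ))

/-- Coefficient of `x^{-n-1}` in `(z+x)^β f(x)`. -/
def mulZpX (z β : ℂ) (f : ℂ → ℂ) (n : ℂ) : ℂ :=
  ∑ᶠ i : ℕ, cbinom β i * bpow z (β - (i : ℂ)) * f (n + (i : ℂ))

/-- Coefficient of `x^{-n-1}` in `f(x+z) = (e^{z d/dx} f)(x)`. -/
def substZ (z : ℂ) (f : ℂ → ℂ) (n : ℂ) : ℂ :=
  ∑ᶠ i : ℕ, cbinom ((i : ℂ) - n - 1) i * z ^ i * f (n - (i : ℂ))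

/-- A vertex algebra over `ℂ`, presented by its components `Y u n = u_n`, with the
Jacobi identity in (componentwise) Borcherds form. -/
structure VertexAlg (V : Type*) [AddCommGroup V] [Module ℂ V] where
  Y : V →ₗ[ℂ] ℤ → V →ₗ[ℂ] V
  one : V
  trunc : ∀ u v : V, ∃ N : ℤ, ∀ n : ℤ, N ≤ n → Y u n v = 0
  vacuum_eq : ∀ (n : ℤ) (v : V), Y one n v = if n = -1 then v else 0
  create : ∀ (u : V) (n : ℤ), 0 ≤ n → Y u n one = 0
  create' : ∀ u : V, Y u (-1) one = u
  jacobi : ∀ (u v w : V) (a b c : ℤ),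
    (∑ᶠ i : ℕ, ((-1 : ℂ) ^ i * cbinom (a : ℂ) i) •
      (Y u (a + b - (i : ℤ)) (Y v (c + (i : ℤ)) w)
        - ((-1 : ℂ) ^ a) • Y v (a + c - (i : ℤ)) (Y u (b + (i : ℤ)) w)))
    = ∑ᶠ i : ℕ, cbinom (b : ℂ) i • Y (Y u (a + (i : ℤ)) v) (b + c - (i : ℤ)) w

/-- An automorphism of a vertex algebra. -/
structure VAAut {V : Type*} [AddCommGroup V] [Module ℂ V] (A : VertexAlg V) where
  g : V ≃ₗ[ℂ] V
  map_one : g A.one = A.one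
  map_Y : ∀ (u : V) (n : ℤ) (v : V), g (A.Y u n v) = A.Y (g u) n (g v)

/-- `v` lies in the eigenspace `V^j = {v | σ v = e^{2πij/T} v}`. -/
def eig {V : Type*} [AddCommGroup V] [Module ℂ V] {A : VertexAlg V}
    (σ : VAAut A) (T : ℕ) (j : ℤ) (v : V) : Prop :=
  σ.g v = Complex.exp (2 * (Real.pi : ℂ) * Complex.I * (j : ℂ) / (T : ℂ)) • v

/-- A (weak) `σ`-twisted module for a vertex algebra, presented componentwise:
`Y v n` is the coefficient of `x^{-n-1}` in `Y_W(v,x)`; the `σ`-twisted Jacobi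
identity is stated coefficientwise. -/
structure TwistedModule {V : Type*} [AddCommGroup V] [Module ℂ V]
    (W : Type*) [AddCommGroup W] [Module ℂ W]
    (A : VertexAlg V) (σ : VAAut A) (T : ℕ) where
  Y : V →ₗ[ℂ] ℂ → W →ₗ[ℂ] W
  vacuum_eq : ∀ (n : ℂ) (w : W), Y A.one n w = if n = -1 then w else 0
  latt : ∀ (v : V) (n : ℂ), (∀ m : ℤ, n ≠ (m : ℂ) / (T : ℂ)) → Y v n = 0
  eig_supp : ∀ (j : ℤ) (v : V), eig σ T j v →
    ∀ n : ℂ, (∀ m : ℤ, n ≠ (j : ℂ) / (T : ℂ) + (m : ℂ)) → Y v n = 0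
  trunc : ∀ (v : V) (w : W), ∃ N : ℤ, ∀ m : ℤ, N ≤ m → Y v ((m : ℂ) / (T : ℂ)) w = 0
  jacobi : ∀ (j : ℤ) (u : V), eig σ T j u → ∀ (v : V) (w : W) (a b c : ℤ),
    (∑ᶠ i : ℕ, ((-1 : ℂ) ^ i * cbinom (a : ℂ) i) •
      (Y u ((a : ℂ) + (b : ℂ) / (T : ℂ) - (i : ℂ)) (Y v ((c : ℂ) / (T : ℂ) + (i : ℂ)) w)
        - ((-1 : ℂ) ^ a) •
          Y v ((a : ℂ) + (c : ℂ) / (T : ℂ) - (i : ℂ)) (Y u ((b : ℂ) / (T : ℂ) + (i : ℂ)) w)))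
    = if (T : ℤ) ∣ (b - j) then
        (∑ᶠ i : ℕ, cbinom ((b : ℂ) / (T : ℂ)) i •
          Y (A.Y u (a + (i : ℤ)) v) ((b : ℂ) / (T : ℂ) + (c : ℂ) / (T : ℂ) - (i : ℂ)) w)
      else 0

/-- A right `σ`-twisted module for a vertex algebra, presented componentwise
(opposite twisted Jacobi identity, coefficientwise). -/
structure RightTwistedModule {V : Type*} [AddCommGroup V] [Module ℂ V]
    (W : Type*) [AddCommGroup W] [Module ℂ W]
    (A : VertexAlg V) (σ : VAAut A) (T : ℕ) where
  Y : V →ₗ[ℂ] ℂ → W →ₗ[ℂ] W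
  vacuum_eq : ∀ (n : ℂ) (w : W), Y A.one n w = if n = -1 then w else 0
  latt : ∀ (v : V) (n : ℂ), (∀ m : ℤ, n ≠ (m : ℂ) / (T : ℂ)) → Y v n = 0
  trunc : ∀ (v : V) (w : W), ∃ N : ℤ, ∀ m : ℤ, m ≤ N → Y v ((m : ℂ) / (T : ℂ)) w = 0
  jacobi : ∀ (j : ℤ) (u : V), eig σ T j u → ∀ (v : V) (w : W) (a b c : ℤ),
    (∑ᶠ i : ℕ, ((-1 : ℂ) ^ i * cbinom (a : ℂ) i) •
      (Y v ((c : ℂ) / (T : ℂ) + (i : ℂ)) (Y u ((a : ℂ) + (b : ℂ) / (T : ℂ) - (i : ℂ)) w)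
        - ((-1 : ℂ) ^ a) •
          Y u ((b : ℂ) / (T : ℂ) + (i : ℂ)) (Y v ((a : ℂ) + (c : ℂ) / (T : ℂ) - (i : ℂ)) w)))
    = if (T : ℤ) ∣ (b + j) then
        (∑ᶠ i : ℕ, cbinom ((b : ℂ) / (T : ℂ)) i •
          Y (A.Y u (a + (i : ℤ)) v) ((b : ℂ) / (T : ℂ) + (c : ℂ) / (T : ℂ) - (i : ℂ)) w)
      else 0

open Finset

lemma cbinom_zero (a : ℂ) : cbinom a 0 = 1 := by simp [cbinom]

lemma cbinom_succ (a : ℂ) (n : ℕ) :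
    ((n : ℂ) + 1) * cbinom a (n + 1) = (a - n) * cbinom a n := by
  unfold cbinom
  rw [Finset.prod_range_succ]
  have h1 : ((n + 1).factorial : ℂ) = ((n : ℂ) + 1) * (n.factorial : ℂ) := by
    rw [Nat.factorial_succ]; push_cast; ring
  have h2 : (n.factorial : ℂ) ≠ 0 := Nat.cast_ne_zero.2 n.factorial_ne_zero
  have h3 : ((n : ℂ) + 1) ≠ 0 := Nat.cast_add_one_ne_zero n
  rw [h1]
  field_simp [h1]

lemma cbinom_nat_lt {m k : ℕ} (h : m < k) : cbinom (m : ℂ) k = 0 := by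
  unfold cbinom
  rw [Finset.prod_eq_zero (Finset.mem_range.2 h) (by simp)]
  simp

lemma cbinom_nat (m k : ℕ) : cbinom (m : ℂ) k = (m.choose k : ℂ) := by
  rcases le_or_gt k m with h | h
  · unfold cbinom
    have : ∏ i ∈ Finset.range k, ((m : ℂ) - i) = ((m.descFactorial k : ℕ) : ℂ) := by
      rw [Nat.descFactorial_eq_prod_range]
      push_cast
      refine Finset.prod_congr rfl fun i hi => ?_
      rw [Nat.cast_sub (le_trans (Nat.le_of_lt_succ (Nat.lt_succ_of_lt (mem_range.1 hi))) h)]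
    rw [this, Nat.descFactorial_eq_factorial_mul_choose]
    push_cast
    exact mul_div_cancel_left₀ _ (Nat.cast_ne_zero.2 k.factorial_ne_zero)
  · rw [cbinom_nat_lt h, Nat.choose_eq_zero_of_lt h, Nat.cast_zero]

lemma cbinom_mul (x : ℂ) (m i : ℕ) : cbinom x m * cbinom (x - m) i
    = (∏ j ∈ Finset.range (m + i), (x - j)) / ((m.factorial : ℂ) * i.factorial) := by
  unfold cbinom
  rw [Finset.prod_range_add]
  have : ∏ j ∈ Finset.range i, (x - (m : ℂ) - j) = ∏ j ∈ Finset.range i, (x - ((m + j : ℕ) : ℂ)) := by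
    refine Finset.prod_congr rfl fun j _ => by push_cast; ring
  rw [← this]
  field_simp

lemma cbinom_trinom (x : ℂ) (m i : ℕ) :
    cbinom x m * cbinom (x - m) i = cbinom x i * cbinom (x - i) m := by
  rw [cbinom_mul, cbinom_mul, add_comm i m, mul_comm (i.factorial : ℂ)]

lemma cbinom_choose_eq (x : ℂ) {q i : ℕ} (h : q ≤ i) :
    cbinom x i * (i.choose q : ℂ) = cbinom x q * cbinom (x - q) (i - q) := by
  rw [cbinom_mul, Nat.add_sub_cancel' h]
  unfold cbinom
  have h2 : ((i.choose q : ℕ) : ℂ) * (q.factorial : ℂ) * ((i - q).factorial : ℂ) = (i.factorial : ℂ) := by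
    exact_mod_cast congrArg (Nat.cast (R := ℂ)) (Nat.choose_mul_factorial_mul_factorial h)
  have hq : (q.factorial : ℂ) ≠ 0 := Nat.cast_ne_zero.2 q.factorial_ne_zero
  have hiq : ((i - q).factorial : ℂ) ≠ 0 := Nat.cast_ne_zero.2 (i - q).factorial_ne_zero
  have hi : (i.factorial : ℂ) ≠ 0 := Nat.cast_ne_zero.2 i.factorial_ne_zero
  field_simp
  rw [← h2]
  ring

lemma cbinom_vandermonde (x y : ℂ) (n : ℕ) :
    cbinom (x + y) n = ∑ k ∈ Finset.range (n + 1), cbinom x k * cbinom y (n - k) := by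
  induction n with
  | zero => simp [cbinom]
  | succ n ih =>
    have hn1 : ((n : ℂ) + 1) ≠ 0 := Nat.cast_add_one_ne_zero n
    have key : ((n : ℂ) + 1) * ∑ k ∈ Finset.range (n + 2), cbinom x k * cbinom y (n + 1 - k)
        = (x + y - n) * ∑ k ∈ Finset.range (n + 1), cbinom x k * cbinom y (n - k) := by
      rw [Finset.mul_sum]
      have split : ∀ k ∈ Finset.range (n + 2),
          ((n : ℂ) + 1) * (cbinom x k * cbinom y (n + 1 - k))
          = (k : ℂ) * (cbinom x k * cbinom y (n + 1 - k))
            + ((n + 1 - k : ℕ) : ℂ) * (cbinom x k * cbinom y (n + 1 - k)) := by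
        intro k hk
        have hk' : k ≤ n + 1 := Nat.lt_succ_iff.1 (mem_range.1 hk)
        have : ((n + 1 - k : ℕ) : ℂ) = (n : ℂ) + 1 - k := by
          rw [Nat.cast_sub hk']; push_cast; ring
        rw [this]; ring
      rw [Finset.sum_congr rfl split, Finset.sum_add_distrib]
      have pA : ∑ k ∈ Finset.range (n + 2), (k : ℂ) * (cbinom x k * cbinom y (n + 1 - k))
          = ∑ k ∈ Finset.range (n + 1), (x - k) * cbinom x k * cbinom y (n - k) := by
        rw [Finset.sum_range_succ']
        simp only [Nat.cast_zero, zero_mul, add_zero]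
        refine Finset.sum_congr rfl fun k hk => ?_
        have h2 : ((k : ℂ) + 1) * cbinom x (k + 1) = (x - k) * cbinom x k := cbinom_succ x k
        push_cast
        rw [← mul_assoc, h2]
      have pB : ∑ k ∈ Finset.range (n + 2), ((n + 1 - k : ℕ) : ℂ) * (cbinom x k * cbinom y (n + 1 - k))
          = ∑ k ∈ Finset.range (n + 1), (y - ((n : ℂ) - k)) * cbinom x k * cbinom y (n - k) := by
        rw [Finset.sum_range_succ]
        simp only [Nat.sub_self, Nat.cast_zero, zero_mul, add_zero]
        refine Finset.sum_congr rfl fun k hk => ?_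
        have hk' : k ≤ n := Nat.lt_succ_iff.1 (mem_range.1 hk)
        have h1 : n + 1 - k = (n - k) + 1 := by omega
        have h2 := cbinom_succ y (n - k)
        have h3 : ((n + 1 - k : ℕ) : ℂ) = ((n - k : ℕ) : ℂ) + 1 := by rw [h1]; push_cast; ring
        have h4 : ((n - k : ℕ) : ℂ) = (n : ℂ) - k := Nat.cast_sub hk'
        rw [h1, Nat.cast_add, Nat.cast_one]
        calc (((n - k : ℕ) : ℂ) + 1) * (cbinom x k * cbinom y ((n - k) + 1))
            = cbinom x k * ((((n - k : ℕ) : ℂ) + 1) * cbinom y ((n - k) + 1)) := by ring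
          _ = cbinom x k * ((y - ((n - k : ℕ) : ℂ)) * cbinom y (n - k)) := by rw [h2]
          _ = (y - ((n : ℂ) - k)) * cbinom x k * cbinom y (n - k) := by rw [h4]; ring
      rw [pA, pB, ← Finset.sum_add_distrib, Finset.mul_sum]
      refine Finset.sum_congr rfl fun k hk => ?_
      ring
    have h1 := cbinom_succ (x + y) n
    have : ((n : ℂ) + 1) * cbinom (x + y) (n + 1) = ((n : ℂ) + 1) * ∑ k ∈ Finset.range (n + 2), cbinom x k * cbinom y (n + 1 - k) := by
      rw [h1, ih, key]
    exact mul_left_cancel₀ hn1 this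

lemma cbinom_reflect (n : ℂ) (i : ℕ) :
    cbinom ((i : ℂ) - n - 1) i = (-1) ^ i * cbinom n i := by
  unfold cbinom
  rw [div_eq_iff (Nat.cast_ne_zero.2 i.factorial_ne_zero)]
  have := Finset.prod_range_reflect (fun j : ℕ => ((i : ℂ) - n - 1 - j)) i
  rw [← this]
  have : ∀ j ∈ Finset.range i, ((i : ℂ) - n - 1 - ((i - 1 - j : ℕ) : ℂ)) = -(n - j) := by
    intro j hj
    have hj' : j < i := mem_range.1 hj
    have : ((i - 1 - j : ℕ) : ℂ) = (i : ℂ) - 1 - j := by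
      have : i - 1 - j = i - (1 + j) := by omega
      rw [this, Nat.cast_sub (by omega)]
      push_cast; ring
    rw [this]; ring
  rw [Finset.prod_congr rfl this]
  have e1 : ∏ x ∈ Finset.range i, -(n - (x : ℂ)) = ∏ x ∈ Finset.range i, (-1) * (n - (x : ℂ)) :=
    Finset.prod_congr rfl fun x _ => by ring
  rw [e1, Finset.prod_mul_distrib, Finset.prod_const, mul_assoc,
    div_mul_cancel₀ _ (Nat.cast_ne_zero.2 i.factorial_ne_zero), Finset.card_range]

lemma finsum_eq_sum_range {M : Type*} [AddCommMonoid M] {f : ℕ → M} {K : ℕ}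
    (h : ∀ i, K ≤ i → f i = 0) : ∑ᶠ i, f i = ∑ i ∈ Finset.range K, f i := by
  apply finsum_eq_sum_of_support_subset
  intro i hi
  simp only [Function.mem_support] at hi
  simp only [coe_range, Set.mem_Iio]
  by_contra hK
  exact hi (h i (le_of_not_gt hK))

lemma sum_range_ext {M : Type*} [AddCommMonoid M] {f : ℕ → M} {K K' : ℕ} (hK : K ≤ K')
    (h : ∀ i, K ≤ i → f i = 0) : ∑ i ∈ Finset.range K', f i = ∑ i ∈ Finset.range K, f i :=
  (Finset.sum_subset (Finset.range_subset_range.2 hK)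
    (fun i _ hi => h i (le_of_not_gt (fun hc => hi (Finset.mem_range.2 hc))))).symm

lemma sum_shift {M : Type*} [AddCommMonoid M] (G : ℕ → M) (k E : ℕ)
    (h0 : ∀ i, i < k → G i = 0) (h1 : ∀ i, E ≤ i → G i = 0) :
    ∑ i ∈ Finset.range E, G i = ∑ t ∈ Finset.range E, G (t + k) := by
  have e1 : ∑ i ∈ Finset.range E, G i = ∑ i ∈ Finset.range (E + k), G i :=
    (sum_range_ext (Nat.le_add_right _ _) h1).symm
  have e4 : ∑ i ∈ Finset.range (E + k), G i = ∑ i ∈ Finset.Ico 0 (E + k), G i := by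
    rw [Finset.range_eq_Ico]
  rw [e1, e4, ← Finset.sum_Ico_consecutive _ (Nat.zero_le k) (Nat.le_add_left k E)]
  have e2 : ∑ i ∈ Finset.Ico 0 k, G i = 0 :=
    Finset.sum_eq_zero fun i hi => h0 i (Finset.mem_Ico.1 hi).2
  rw [e2, zero_add, Finset.sum_Ico_eq_sum_range]
  have e3 : E + k - k = E := by omega
  rw [e3]
  exact Finset.sum_congr rfl fun t _ => by rw [add_comm]

lemma triangle {M : Type*} [AddCommMonoid M] (F : ℕ → ℕ → M) (D : ℕ) :
    ∑ k ∈ Finset.range D, ∑ j ∈ Finset.range (k + 1), F j (k - j)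
      = ∑ j ∈ Finset.range D, ∑ m ∈ Finset.range (D - j), F j m := by
  induction D with
  | zero => simp
  | succ D ih =>
    rw [Finset.sum_range_succ, ih,
      Finset.sum_range_succ (f := fun j => ∑ m ∈ Finset.range (D + 1 - j), F j m),
      Finset.sum_range_succ (f := fun j => F j (D - j))]
    have h1 : ∀ j ∈ Finset.range D, ∑ m ∈ Finset.range (D + 1 - j), F j m
        = (∑ m ∈ Finset.range (D - j), F j m) + F j (D - j) := by
      intro j hj
      have hj' : j < D := Finset.mem_range.1 hj
      have e : D + 1 - j = (D - j) + 1 := by omega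
      rw [e, Finset.sum_range_succ]
    rw [Finset.sum_congr rfl h1, Finset.sum_add_distrib]
    have e2 : D + 1 - D = 1 := by omega
    rw [e2, Nat.sub_self]
    simp only [Finset.sum_range_one]
    abel

lemma alt_sum (α : ℂ) (u : ℕ) :
    ∑ k ∈ Finset.range (u + 1), (-1 : ℂ) ^ k * cbinom α k * cbinom (α - k) (u - k)
      = if u = 0 then 1 else 0 := by
  have e : ∀ k ∈ Finset.range (u + 1), (-1 : ℂ) ^ k * cbinom α k * cbinom (α - k) (u - k)
      = cbinom α u * ((-1) ^ k * (u.choose k : ℂ)) := by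
    intro k hk
    have hk' : k ≤ u := Nat.lt_succ_iff.1 (Finset.mem_range.1 hk)
    have h := cbinom_choose_eq α hk'
    calc (-1 : ℂ) ^ k * cbinom α k * cbinom (α - k) (u - k)
        = (-1 : ℂ) ^ k * (cbinom α k * cbinom (α - k) (u - k)) := by ring
      _ = (-1 : ℂ) ^ k * (cbinom α u * (u.choose k : ℂ)) := by rw [← h]
      _ = cbinom α u * ((-1) ^ k * (u.choose k : ℂ)) := by ring
  rw [Finset.sum_congr rfl e, ← Finset.mul_sum]
  have e2 : ∑ k ∈ Finset.range (u + 1), ((-1 : ℂ) ^ k * (u.choose k : ℂ))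
      = if u = 0 then 1 else 0 := by
    have h := Int.alternating_sum_range_choose (n := u)
    have := congrArg (fun z : ℤ => (z : ℂ)) h
    push_cast at this
    rw [this]
  rw [e2]
  by_cases h0 : u = 0 <;> simp [h0, cbinom_zero]

lemma scalar3 (α : ℂ) (t k l : ℕ) :
    cbinom α (t + k) * cbinom ((t + k : ℕ) : ℂ) k * cbinom (α - ((t + k : ℕ) : ℂ)) l
      = cbinom α k * cbinom (α - k) l * cbinom (α - k - l) t := by
  have h1 : cbinom α (t + k) * ((t + k).choose k : ℂ) = cbinom α k * cbinom (α - k) (t + k - k) :=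
    cbinom_choose_eq α (Nat.le_add_left k t)
  rw [Nat.add_sub_cancel] at h1
  have h2 : cbinom ((t + k : ℕ) : ℂ) k = ((t + k).choose k : ℂ) := cbinom_nat _ _
  have h4 : α - ((t + k : ℕ) : ℂ) = (α - k) - t := by push_cast; ring
  calc cbinom α (t + k) * cbinom ((t + k : ℕ) : ℂ) k * cbinom (α - ((t + k : ℕ) : ℂ)) l
      = (cbinom α (t + k) * ((t + k).choose k : ℂ)) * cbinom ((α - k) - t) l := by
        rw [h2, h4]
    _ = cbinom α k * (cbinom (α - k) t * cbinom ((α - k) - t) l) := by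
        rw [h1, mul_assoc]
    _ = cbinom α k * (cbinom (α - k) l * cbinom ((α - k) - l) t) := by rw [cbinom_trinom]
    _ = cbinom α k * cbinom (α - k) l * cbinom (α - k - l) t := by ring

lemma collapse {M : Type*} [AddCommGroup M] [Module ℂ M] (α : ℂ) (g : ℕ → M) {D E : ℕ}
    (hED : E ≤ D) (hg : ∀ u, E ≤ u → g u = 0) :
    ∑ k ∈ Finset.range D, ∑ l ∈ Finset.range E,
      ((-1 : ℂ) ^ k * cbinom α k * cbinom (α - k) l) • g (k + l) = g 0 := by
  set F : ℕ → ℕ → M := fun k l => ((-1 : ℂ) ^ k * cbinom α k * cbinom (α - k) l) • g (k + l) with hF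
  have hF0 : ∀ k l, E ≤ k + l → F k l = 0 := by
    intro k l h; simp only [hF, hg _ h, smul_zero]
  have step1 : ∑ k ∈ Finset.range D, ∑ l ∈ Finset.range E, F k l
      = ∑ j ∈ Finset.range (D + E), ∑ m ∈ Finset.range (D + E - j), F j m := by
    rw [sum_range_ext (Nat.le_add_right D E)
      (fun j hj => Finset.sum_eq_zero fun m _ => hF0 j m (by omega))]
    refine Finset.sum_congr rfl fun j hj => ?_
    have hj' : j < D := Finset.mem_range.1 hj
    exact (sum_range_ext (by omega) (fun m hm => hF0 j m (by omega))).symm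
  rw [step1, ← triangle]
  have step2 : ∀ u ∈ Finset.range (D + E), ∑ j ∈ Finset.range (u + 1), F j (u - j)
      = (if u = 0 then 1 else 0 : ℂ) • g u := by
    intro u _
    have : ∀ j ∈ Finset.range (u + 1), F j (u - j)
        = ((-1 : ℂ) ^ j * cbinom α j * cbinom (α - j) (u - j)) • g u := by
      intro j hj
      have hj' : j ≤ u := Nat.lt_succ_iff.1 (Finset.mem_range.1 hj)
      simp only [hF]
      rw [Nat.add_sub_cancel' hj']
    rw [Finset.sum_congr rfl this, ← Finset.sum_smul, alt_sum]
  rw [Finset.sum_congr rfl step2]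
  by_cases hDE : D + E = 0
  · rw [hDE]
    simp only [Finset.range_zero, Finset.sum_empty]
    exact (hg 0 (by omega)).symm
  · rw [Finset.sum_eq_single 0 (fun u _ hu => by simp [hu])
      (fun h => absurd (Finset.mem_range.2 (by omega)) h)]
    simp

lemma inner_collapse {W : Type*} [AddCommGroup W] [Module ℂ W] (α ζ : ℂ) {E D : ℕ}
    (hED : E ≤ D) (X : ℂ → ℕ → W) (hX : ∀ (c : ℂ) (s : ℕ), E ≤ s → X c s = 0) :
    ∑ i ∈ Finset.range E, ∑ k ∈ Finset.range D, ∑ l ∈ Finset.range E,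
      ((-1 : ℂ) ^ i * cbinom α i * cbinom (i : ℂ) k * cbinom (α - i) l * ζ ^ (k + l)) •
        X ((i : ℂ) - k) (i + l)
    = ∑ i ∈ Finset.range E, ((-1 : ℂ) ^ i * cbinom α i) • X (i : ℂ) i := by
  -- swap i and k
  rw [Finset.sum_comm]
  -- for fixed k, shift the i-sum by k, apply scalar3
  have step1 : ∀ k ∈ Finset.range D,
      (∑ i ∈ Finset.range E, ∑ l ∈ Finset.range E,
        ((-1 : ℂ) ^ i * cbinom α i * cbinom (i : ℂ) k * cbinom (α - i) l * ζ ^ (k + l)) •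
          X ((i : ℂ) - k) (i + l))
      = ∑ t ∈ Finset.range E, ∑ l ∈ Finset.range E,
          (((-1 : ℂ) ^ k * cbinom α k * cbinom (α - k) l)
            * ((-1 : ℂ) ^ t * cbinom (α - (k : ℂ) - l) t * ζ ^ (k + l))) • X ((t : ℂ)) (t + k + l) := by
    intro k _
    rw [sum_shift _ k E]
    · refine Finset.sum_congr rfl fun t _ => Finset.sum_congr rfl fun l _ => ?_
      have hc : ((t + k : ℕ) : ℂ) - k = (t : ℂ) := by push_cast; ring
      have harg : t + k + l = t + k + l := rfl
      have hsc : (-1 : ℂ) ^ (t + k) * cbinom α (t + k) * cbinom ((t + k : ℕ) : ℂ) k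
            * cbinom (α - ((t + k : ℕ) : ℂ)) l * ζ ^ (k + l)
          = ((-1 : ℂ) ^ k * cbinom α k * cbinom (α - k) l)
            * ((-1 : ℂ) ^ t * cbinom (α - (k : ℂ) - l) t * ζ ^ (k + l)) := by
        have h3 := scalar3 α t k l
        calc (-1 : ℂ) ^ (t + k) * cbinom α (t + k) * cbinom ((t + k : ℕ) : ℂ) k
              * cbinom (α - ((t + k : ℕ) : ℂ)) l * ζ ^ (k + l)
            = (cbinom α (t + k) * cbinom ((t + k : ℕ) : ℂ) k * cbinom (α - ((t + k : ℕ) : ℂ)) l)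
              * ((-1 : ℂ) ^ (t + k) * ζ ^ (k + l)) := by ring
          _ = (cbinom α k * cbinom (α - k) l * cbinom (α - (k : ℂ) - l) t)
              * ((-1 : ℂ) ^ (t + k) * ζ ^ (k + l)) := by rw [h3]
          _ = ((-1 : ℂ) ^ k * cbinom α k * cbinom (α - k) l)
              * ((-1 : ℂ) ^ t * cbinom (α - (k : ℂ) - l) t * ζ ^ (k + l)) := by
              rw [pow_add]; ring
      rw [hc, hsc]
    · -- vanishing below k : cbinom i k = 0
      intro i hik
      refine Finset.sum_eq_zero fun l _ => ?_
      rw [cbinom_nat_lt hik]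
      simp
    · -- vanishing above E : X _ (i+l) = 0
      intro i hEi
      refine Finset.sum_eq_zero fun l _ => ?_
      rw [hX _ _ (le_trans hEi (Nat.le_add_right i l))]
      simp
  rw [Finset.sum_congr rfl step1, Finset.sum_comm]
  -- now for fixed t, collapse the (k,l) double sum
  refine Finset.sum_congr rfl fun t _ => ?_
  have hcol := collapse (M := W) α
    (fun u => ((-1 : ℂ) ^ t * cbinom (α - (u : ℕ)) t * ζ ^ u) • X ((t : ℂ)) (t + u)) hED
    (fun u hu => by
      simp only [hX _ _ (le_trans hu (Nat.le_add_left u t)), smul_zero])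
  have e1 : ∀ k ∈ Finset.range D, ∀ l ∈ Finset.range E,
      (((-1 : ℂ) ^ k * cbinom α k * cbinom (α - k) l)
        * ((-1 : ℂ) ^ t * cbinom (α - (k : ℂ) - l) t * ζ ^ (k + l))) • X ((t : ℂ)) (t + k + l)
      = ((-1 : ℂ) ^ k * cbinom α k * cbinom (α - k) l) •
          (((-1 : ℂ) ^ t * cbinom (α - ((k + l : ℕ) : ℂ)) t * ζ ^ (k + l)) • X ((t : ℂ)) (t + (k + l))) := by
    intro k _ l _
    have h1 : α - ((k + l : ℕ) : ℂ) = α - (k : ℂ) - l := by push_cast; ring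
    have h2 : t + (k + l) = t + k + l := by omega
    rw [smul_smul, h1, h2]
  calc ∑ k ∈ Finset.range D, ∑ l ∈ Finset.range E,
        (((-1 : ℂ) ^ k * cbinom α k * cbinom (α - k) l)
          * ((-1 : ℂ) ^ t * cbinom (α - (k : ℂ) - l) t * ζ ^ (k + l))) • X ((t : ℂ)) (t + k + l)
      = ∑ k ∈ Finset.range D, ∑ l ∈ Finset.range E,
          ((-1 : ℂ) ^ k * cbinom α k * cbinom (α - k) l) •
            (((-1 : ℂ) ^ t * cbinom (α - ((k + l : ℕ) : ℂ)) t * ζ ^ (k + l)) • X ((t : ℂ)) (t + (k + l))) :=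
        Finset.sum_congr rfl fun k hk => Finset.sum_congr rfl fun l hl => e1 k hk l hl
    _ = ((-1 : ℂ) ^ t * cbinom (α - ((0 : ℕ) : ℂ)) t * ζ ^ (0 : ℕ)) • X ((t : ℂ)) (t + 0) := hcol
    _ = ((-1 : ℂ) ^ t * cbinom α t) • X ((t : ℂ)) t := by
        norm_num

lemma vandermonde_sum {W : Type*} [AddCommGroup W] [Module ℂ W] (x y ζ : ℂ) {E : ℕ} (Z : ℕ → W)
    (hZ : ∀ l, E ≤ l → Z l = 0) :
    ∑ l ∈ Finset.range E, (cbinom (x + y) l * ζ ^ l) • Z l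
      = ∑ l₁ ∈ Finset.range E, ∑ l₂ ∈ Finset.range E,
          (cbinom x l₁ * cbinom y l₂ * ζ ^ (l₁ + l₂)) • Z (l₁ + l₂) := by
  set F : ℕ → ℕ → W := fun j m => (cbinom x j * cbinom y m * ζ ^ (j + m)) • Z (j + m) with hF
  calc ∑ l ∈ Finset.range E, (cbinom (x + y) l * ζ ^ l) • Z l
      = ∑ l ∈ Finset.range E, ∑ j ∈ Finset.range (l + 1), F j (l - j) := by
        refine Finset.sum_congr rfl fun l _ => ?_
        rw [cbinom_vandermonde, Finset.sum_mul, Finset.sum_smul]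
        refine Finset.sum_congr rfl fun j hj => ?_
        have h : j + (l - j) = l := Nat.add_sub_cancel' (Nat.lt_succ_iff.1 (mem_range.1 hj))
        simp only [hF, h]
    _ = ∑ j ∈ Finset.range E, ∑ m ∈ Finset.range (E - j), F j m := triangle F E
    _ = ∑ l₁ ∈ Finset.range E, ∑ l₂ ∈ Finset.range E, F l₁ l₂ := by
        refine Finset.sum_congr rfl fun j hj => ?_
        have hj' : j < E := mem_range.1 hj
        exact (sum_range_ext (by omega)
          (fun m hm => by simp only [hF, hZ (j + m) (by omega), smul_zero])).symm

lemma coreF {W : Type*} [AddCommGroup W] [Module ℂ W]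
    (P Q : ℂ → W →ₗ[ℂ] W) (w : W) (α μ ν ζ : ℂ) {E D : ℕ} (hED : E ≤ D)
    (hQ : ∀ s : ℕ, E ≤ s → Q (α + ν - s) w = 0)
    (hP : ∀ i s k : ℕ, i < E → D ≤ k → P (μ + i - k) (Q (α + ν - s) w) = 0) :
    ∑ i ∈ Finset.range E, ((-1 : ℂ) ^ i * cbinom α i) •
        ∑ k ∈ Finset.range D, (cbinom (μ + i) k * ζ ^ k) •
          P (μ + i - k) (∑ l ∈ Finset.range E, (cbinom (α + ν - i) l * ζ ^ l) • Q (α + ν - i - l) w)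
    = ∑ m ∈ Finset.range E, ∑ p ∈ Finset.range D, (cbinom ν m * cbinom μ p * ζ ^ (m + p)) •
        ∑ i ∈ Finset.range E, ((-1 : ℂ) ^ i * cbinom α i) • P (μ - p + i) (Q (α + ν - m - i) w) := by
  have hQ2 : ∀ (i l : ℕ), E ≤ i + l → Q (α + ν - i - l) w = 0 := by
    intro i l h
    have e : α + ν - (i : ℂ) - l = α + ν - ((i + l : ℕ) : ℂ) := by push_cast; ring
    rw [e]; exact hQ (i + l) h
  -- step 1: expand the Q-side sum by Vandermonde
  have step1 : ∀ i : ℕ, i < E →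
      (∑ l ∈ Finset.range E, (cbinom (α + ν - i) l * ζ ^ l) • Q (α + ν - i - l) w)
      = ∑ l₁ ∈ Finset.range E, ∑ l₂ ∈ Finset.range E,
          (cbinom (α - i) l₁ * cbinom ν l₂ * ζ ^ (l₁ + l₂)) • Q (α + ν - i - (l₁ + l₂ : ℕ)) w := by
    intro i hi
    have e0 : ∀ l : ℕ, cbinom (α + ν - i) l = cbinom ((α - i) + ν) l := fun l => by
      rw [show α + ν - (i : ℂ) = (α - i) + ν from by ring]
    calc ∑ l ∈ Finset.range E, (cbinom (α + ν - i) l * ζ ^ l) • Q (α + ν - i - l) w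
        = ∑ l ∈ Finset.range E, (cbinom ((α - i) + ν) l * ζ ^ l) •
            (fun s : ℕ => Q (α + ν - i - s) w) l :=
          Finset.sum_congr rfl fun l _ => by rw [e0]
      _ = _ := vandermonde_sum (α - i) ν ζ _ (fun l hl => hQ2 i l (by omega))
  -- step 2: expand the P-side sum by Vandermonde
  have step2 : ∀ i : ℕ, i < E →
      (∑ k ∈ Finset.range D, (cbinom (μ + i) k * ζ ^ k) •
        P (μ + i - k) (∑ l ∈ Finset.range E, (cbinom (α + ν - i) l * ζ ^ l) • Q (α + ν - i - l) w))
      = ∑ k₁ ∈ Finset.range D, ∑ k₂ ∈ Finset.range D,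
          (cbinom μ k₁ * cbinom (i : ℂ) k₂ * ζ ^ (k₁ + k₂)) •
            P (μ + i - (k₁ + k₂ : ℕ))
              (∑ l₁ ∈ Finset.range E, ∑ l₂ ∈ Finset.range E,
                (cbinom (α - i) l₁ * cbinom ν l₂ * ζ ^ (l₁ + l₂)) • Q (α + ν - i - (l₁ + l₂ : ℕ)) w) := by
    intro i hi
    have hZ : ∀ k : ℕ, D ≤ k →
        P (μ + i - k) (∑ l₁ ∈ Finset.range E, ∑ l₂ ∈ Finset.range E,
          (cbinom (α - i) l₁ * cbinom ν l₂ * ζ ^ (l₁ + l₂)) • Q (α + ν - i - (l₁ + l₂ : ℕ)) w) = 0 := by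
      intro k hk
      rw [map_sum]
      refine Finset.sum_eq_zero fun l₁ _ => ?_
      rw [map_sum]
      refine Finset.sum_eq_zero fun l₂ _ => ?_
      rw [map_smul]
      have e : α + ν - (i : ℂ) - ((l₁ + l₂ : ℕ) : ℂ) = α + ν - ((i + l₁ + l₂ : ℕ) : ℂ) := by
        push_cast; ring
      rw [e, hP i (i + l₁ + l₂) k hi hk, smul_zero]
    calc ∑ k ∈ Finset.range D, (cbinom (μ + i) k * ζ ^ k) •
          P (μ + i - k) (∑ l ∈ Finset.range E, (cbinom (α + ν - i) l * ζ ^ l) • Q (α + ν - i - l) w)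
        = ∑ k ∈ Finset.range D, (cbinom (μ + i) k * ζ ^ k) •
            (fun s : ℕ => P (μ + i - s)
              (∑ l₁ ∈ Finset.range E, ∑ l₂ ∈ Finset.range E,
                (cbinom (α - i) l₁ * cbinom ν l₂ * ζ ^ (l₁ + l₂)) • Q (α + ν - i - (l₁ + l₂ : ℕ)) w)) k :=
          Finset.sum_congr rfl fun k _ => by rw [step1 i hi]
      _ = _ := vandermonde_sum μ (i : ℂ) ζ _ hZ
  -- step 3: flatten and reorder, then collapse
  set G : ℕ → ℕ → ℕ → ℕ → ℕ → W := fun i k₁ k₂ l₁ l₂ =>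
    (((-1 : ℂ) ^ i * cbinom α i) * ((cbinom μ k₁ * cbinom (i : ℂ) k₂ * ζ ^ (k₁ + k₂))
      * (cbinom (α - i) l₁ * cbinom ν l₂ * ζ ^ (l₁ + l₂)))) •
      P (μ + i - (k₁ + k₂ : ℕ)) (Q (α + ν - i - (l₁ + l₂ : ℕ)) w) with hG
  have flat : ∑ i ∈ Finset.range E, ((-1 : ℂ) ^ i * cbinom α i) •
        ∑ k ∈ Finset.range D, (cbinom (μ + i) k * ζ ^ k) •
          P (μ + i - k) (∑ l ∈ Finset.range E, (cbinom (α + ν - i) l * ζ ^ l) • Q (α + ν - i - l) w)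
      = ∑ i ∈ Finset.range E, ∑ k₁ ∈ Finset.range D, ∑ k₂ ∈ Finset.range D,
          ∑ l₁ ∈ Finset.range E, ∑ l₂ ∈ Finset.range E, G i k₁ k₂ l₁ l₂ := by
    refine Finset.sum_congr rfl fun i hi => ?_
    rw [step2 i (mem_range.1 hi), Finset.smul_sum]
    refine Finset.sum_congr rfl fun k₁ _ => ?_
    rw [Finset.smul_sum]
    refine Finset.sum_congr rfl fun k₂ _ => ?_
    rw [map_sum, Finset.smul_sum, Finset.smul_sum]
    refine Finset.sum_congr rfl fun l₁ _ => ?_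
    rw [map_sum, Finset.smul_sum, Finset.smul_sum]
    refine Finset.sum_congr rfl fun l₂ _ => ?_
    rw [map_smul, hG]
    simp only [smul_smul]
  rw [flat]
  -- reorder: bring k₁ and l₂ to the outside
  have reorder : ∑ i ∈ Finset.range E, ∑ k₁ ∈ Finset.range D, ∑ k₂ ∈ Finset.range D,
        ∑ l₁ ∈ Finset.range E, ∑ l₂ ∈ Finset.range E, G i k₁ k₂ l₁ l₂
      = ∑ k₁ ∈ Finset.range D, ∑ l₂ ∈ Finset.range E, ∑ i ∈ Finset.range E,
          ∑ k₂ ∈ Finset.range D, ∑ l₁ ∈ Finset.range E, G i k₁ k₂ l₁ l₂ := by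
    have e1 : ∀ i ∈ Finset.range E, ∀ k₁ ∈ Finset.range D,
        ∑ k₂ ∈ Finset.range D, ∑ l₁ ∈ Finset.range E, ∑ l₂ ∈ Finset.range E, G i k₁ k₂ l₁ l₂
        = ∑ l₂ ∈ Finset.range E, ∑ k₂ ∈ Finset.range D, ∑ l₁ ∈ Finset.range E, G i k₁ k₂ l₁ l₂ := by
      intro i _ k₁ _
      calc ∑ k₂ ∈ Finset.range D, ∑ l₁ ∈ Finset.range E, ∑ l₂ ∈ Finset.range E, G i k₁ k₂ l₁ l₂
          = ∑ k₂ ∈ Finset.range D, ∑ l₂ ∈ Finset.range E, ∑ l₁ ∈ Finset.range E, G i k₁ k₂ l₁ l₂ :=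
            Finset.sum_congr rfl fun k₂ _ => Finset.sum_comm
        _ = ∑ l₂ ∈ Finset.range E, ∑ k₂ ∈ Finset.range D, ∑ l₁ ∈ Finset.range E, G i k₁ k₂ l₁ l₂ :=
            Finset.sum_comm
    calc ∑ i ∈ Finset.range E, ∑ k₁ ∈ Finset.range D, ∑ k₂ ∈ Finset.range D,
          ∑ l₁ ∈ Finset.range E, ∑ l₂ ∈ Finset.range E, G i k₁ k₂ l₁ l₂
        = ∑ i ∈ Finset.range E, ∑ k₁ ∈ Finset.range D, ∑ l₂ ∈ Finset.range E,
            ∑ k₂ ∈ Finset.range D, ∑ l₁ ∈ Finset.range E, G i k₁ k₂ l₁ l₂ :=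
          Finset.sum_congr rfl fun i hi => Finset.sum_congr rfl fun k₁ hk₁ => e1 i hi k₁ hk₁
      _ = ∑ k₁ ∈ Finset.range D, ∑ i ∈ Finset.range E, ∑ l₂ ∈ Finset.range E,
            ∑ k₂ ∈ Finset.range D, ∑ l₁ ∈ Finset.range E, G i k₁ k₂ l₁ l₂ := Finset.sum_comm
      _ = ∑ k₁ ∈ Finset.range D, ∑ l₂ ∈ Finset.range E, ∑ i ∈ Finset.range E,
            ∑ k₂ ∈ Finset.range D, ∑ l₁ ∈ Finset.range E, G i k₁ k₂ l₁ l₂ :=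
          Finset.sum_congr rfl fun k₁ _ => Finset.sum_comm
  rw [reorder]
  -- collapse the inner triple sum for each (k₁, l₂)
  have inner : ∀ k₁ ∈ Finset.range D, ∀ l₂ ∈ Finset.range E,
      ∑ i ∈ Finset.range E, ∑ k₂ ∈ Finset.range D, ∑ l₁ ∈ Finset.range E, G i k₁ k₂ l₁ l₂
      = (cbinom ν l₂ * cbinom μ k₁ * ζ ^ (l₂ + k₁)) •
          ∑ i ∈ Finset.range E, ((-1 : ℂ) ^ i * cbinom α i) •
            P (μ - k₁ + i) (Q (α + ν - l₂ - i) w) := by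
    intro k₁ _ l₂ _
    set X : ℂ → ℕ → W := fun c s => P (μ - k₁ + c) (Q (α + ν - l₂ - s) w) with hX
    have hXz : ∀ (c : ℂ) (s : ℕ), E ≤ s → X c s = 0 := by
      intro c s hs
      have e : α + ν - (l₂ : ℂ) - s = α + ν - ((l₂ + s : ℕ) : ℂ) := by push_cast; ring
      simp only [hX, e, hQ (l₂ + s) (by omega), map_zero]
    have key := inner_collapse α ζ hED X hXz
    have e2 : ∀ i ∈ Finset.range E, ∀ k₂ ∈ Finset.range D, ∀ l₁ ∈ Finset.range E,
        G i k₁ k₂ l₁ l₂ = (cbinom ν l₂ * cbinom μ k₁ * ζ ^ (l₂ + k₁)) •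
          (((-1 : ℂ) ^ i * cbinom α i * cbinom (i : ℂ) k₂ * cbinom (α - i) l₁ * ζ ^ (k₂ + l₁)) •
            X ((i : ℂ) - k₂) (i + l₁)) := by
      intro i _ k₂ _ l₁ _
      have ea : μ + (i : ℂ) - ((k₁ + k₂ : ℕ) : ℂ) = μ - k₁ + ((i : ℂ) - k₂) := by push_cast; ring
      have eb : α + ν - (i : ℂ) - ((l₁ + l₂ : ℕ) : ℂ) = α + ν - (l₂ : ℂ) - ((i + l₁ : ℕ) : ℂ) := by
        push_cast; ring
      simp only [hG, hX, ea, eb, smul_smul]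
      congr 1
      ring
    calc ∑ i ∈ Finset.range E, ∑ k₂ ∈ Finset.range D, ∑ l₁ ∈ Finset.range E, G i k₁ k₂ l₁ l₂
        = ∑ i ∈ Finset.range E, ∑ k₂ ∈ Finset.range D, ∑ l₁ ∈ Finset.range E,
            (cbinom ν l₂ * cbinom μ k₁ * ζ ^ (l₂ + k₁)) •
              (((-1 : ℂ) ^ i * cbinom α i * cbinom (i : ℂ) k₂ * cbinom (α - i) l₁ * ζ ^ (k₂ + l₁)) •
                X ((i : ℂ) - k₂) (i + l₁)) :=
          Finset.sum_congr rfl fun i hi => Finset.sum_congr rfl fun k₂ hk₂ =>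
            Finset.sum_congr rfl fun l₁ hl₁ => e2 i hi k₂ hk₂ l₁ hl₁
      _ = (cbinom ν l₂ * cbinom μ k₁ * ζ ^ (l₂ + k₁)) •
            ∑ i ∈ Finset.range E, ∑ k₂ ∈ Finset.range D, ∑ l₁ ∈ Finset.range E,
              ((-1 : ℂ) ^ i * cbinom α i * cbinom (i : ℂ) k₂ * cbinom (α - i) l₁ * ζ ^ (k₂ + l₁)) •
                X ((i : ℂ) - k₂) (i + l₁) := by
          rw [Finset.smul_sum]
          refine Finset.sum_congr rfl fun i _ => ?_
          rw [Finset.smul_sum]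
          refine Finset.sum_congr rfl fun k₂ _ => ?_
          rw [Finset.smul_sum]
      _ = (cbinom ν l₂ * cbinom μ k₁ * ζ ^ (l₂ + k₁)) •
            ∑ i ∈ Finset.range E, ((-1 : ℂ) ^ i * cbinom α i) • X ((i : ℂ)) i := by rw [key]
      _ = _ := rfl
  rw [Finset.sum_congr rfl fun k₁ hk₁ => Finset.sum_congr rfl fun l₂ hl₂ => inner k₁ hk₁ l₂ hl₂]
  exact Finset.sum_comm

lemma coreR {W : Type*} [AddCommGroup W] [Module ℂ W] (β γ ζ : ℂ) {I K : ℕ} (Z : ℕ → ℕ → W)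
    (hZ : ∀ i k : ℕ, i < I → K ≤ k → Z i (i + k) = 0) :
    ∑ i ∈ Finset.range I, cbinom β i •
        ∑ k ∈ Finset.range K, (cbinom (β + γ - i) k * ζ ^ k) • Z i (i + k)
    = ∑ m ∈ Finset.range K, ∑ p ∈ Finset.range K, (cbinom β m * cbinom γ p * ζ ^ (m + p)) •
        ∑ i ∈ Finset.range I, cbinom (β - m) i • Z i (i + (m + p)) := by
  have expand : ∀ i : ℕ, i < I →
      (∑ k ∈ Finset.range K, (cbinom (β + γ - i) k * ζ ^ k) • Z i (i + k))
      = ∑ m ∈ Finset.range K, ∑ p ∈ Finset.range K,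
          (cbinom (β - i) m * cbinom γ p * ζ ^ (m + p)) • Z i (i + (m + p)) := by
    intro i hi
    calc ∑ k ∈ Finset.range K, (cbinom (β + γ - i) k * ζ ^ k) • Z i (i + k)
        = ∑ k ∈ Finset.range K, (cbinom ((β - i) + γ) k * ζ ^ k) • (fun s => Z i (i + s)) k :=
          Finset.sum_congr rfl fun k _ => by rw [show β + γ - (i : ℂ) = (β - i) + γ from by ring]
      _ = _ := vandermonde_sum (β - i) γ ζ _ (fun k hk => hZ i k hi hk)
  calc ∑ i ∈ Finset.range I, cbinom β i •
        ∑ k ∈ Finset.range K, (cbinom (β + γ - i) k * ζ ^ k) • Z i (i + k)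
      = ∑ i ∈ Finset.range I, ∑ m ∈ Finset.range K, ∑ p ∈ Finset.range K,
          (cbinom β m * cbinom γ p * ζ ^ (m + p)) • (cbinom (β - m) i • Z i (i + (m + p))) := by
        refine Finset.sum_congr rfl fun i hi => ?_
        rw [expand i (mem_range.1 hi), Finset.smul_sum]
        refine Finset.sum_congr rfl fun m _ => ?_
        rw [Finset.smul_sum]
        refine Finset.sum_congr rfl fun p _ => ?_
        rw [smul_smul, smul_smul]
        congr 1
        have h := cbinom_trinom β i m
        calc cbinom β i * (cbinom (β - i) m * cbinom γ p * ζ ^ (m + p))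
            = (cbinom β i * cbinom (β - i) m) * (cbinom γ p * ζ ^ (m + p)) := by ring
          _ = (cbinom β m * cbinom (β - m) i) * (cbinom γ p * ζ ^ (m + p)) := by rw [h]
          _ = cbinom β m * cbinom γ p * ζ ^ (m + p) * cbinom (β - m) i := by ring
    _ = ∑ m ∈ Finset.range K, ∑ i ∈ Finset.range I, ∑ p ∈ Finset.range K,
          (cbinom β m * cbinom γ p * ζ ^ (m + p)) • (cbinom (β - m) i • Z i (i + (m + p))) :=
        Finset.sum_comm
    _ = ∑ m ∈ Finset.range K, ∑ p ∈ Finset.range K, ∑ i ∈ Finset.range I,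
          (cbinom β m * cbinom γ p * ζ ^ (m + p)) • (cbinom (β - m) i • Z i (i + (m + p))) :=
        Finset.sum_congr rfl fun m _ => Finset.sum_comm
    _ = _ := by
        refine Finset.sum_congr rfl fun m _ => Finset.sum_congr rfl fun p _ => ?_
        rw [Finset.smul_sum]

-- module layer
section Mod
variable {V : Type*} [AddCommGroup V] [Module ℂ V] {W : Type*} [AddCommGroup W] [Module ℂ W]
  {A : VertexAlg V} {σ : VAAut A} {T : ℕ}

lemma ev_zero (M : RightTwistedModule W A σ T) (hT : 0 < T) (v : V) (w : W) (n : ℂ) :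
    ∃ K : ℕ, ∀ m : ℕ, K ≤ m → M.Y v (n - m) w = 0 := by
  by_cases h : ∃ m : ℤ, n = (m : ℂ) / (T : ℂ)
  · obtain ⟨m, rfl⟩ := h
    obtain ⟨N, hN⟩ := M.trunc v w
    refine ⟨(m - N).toNat, fun i hi => ?_⟩
    have hTc : (T : ℂ) ≠ 0 := Nat.cast_ne_zero.2 hT.ne'
    have harg : (m : ℂ) / T - (i : ℕ) = ((m - i * T : ℤ) : ℂ) / T := by
      push_cast; field_simp
    rw [harg]
    apply hN
    have h1 : (i : ℤ) ≤ (i : ℤ) * T := le_mul_of_one_le_right (Int.ofNat_nonneg i) (by exact_mod_cast hT)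
    have h2 : (m - N) ≤ (i : ℤ) := Int.toNat_le.mp hi
    linarith
  · refine ⟨0, fun i _ => ?_⟩
    have : M.Y v (n - i) = 0 := by
      apply M.latt
      intro m' hm'
      exact h ⟨m' + i * T, by
        have hTc : (T : ℂ) ≠ 0 := Nat.cast_ne_zero.2 hT.ne'
        rw [eq_div_iff hTc] at hm' ⊢
        push_cast
        push_cast at hm'
        linear_combination hm'⟩
    rw [this]
    simp

end Mod

section Mod2
variable {V : Type*} [AddCommGroup V] [Module ℂ V] {W : Type*} [AddCommGroup W] [Module ℂ W]
  {A : VertexAlg V} {σ : VAAut A} {T : ℕ}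

def shY (M : RightTwistedModule W A σ T) (z₀ : ℂ) (v : V) (n : ℂ) (w : W) : W :=
  ∑ᶠ i : ℕ, (cbinom n i * (-z₀) ^ i) • M.Y v (n - i) w

lemma shY_eq_sum (M : RightTwistedModule W A σ T) (z₀ : ℂ) (v : V) (n : ℂ) (w : W) {K : ℕ}
    (hK : ∀ i : ℕ, K ≤ i → M.Y v (n - i) w = 0) :
    shY M z₀ v n w = ∑ i ∈ Finset.range K, (cbinom n i * (-z₀) ^ i) • M.Y v (n - i) w :=
  finsum_eq_sum_range fun i hi => by rw [hK i hi, smul_zero]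

lemma shY_eq_zero (M : RightTwistedModule W A σ T) (z₀ : ℂ) (v : V) (n : ℂ) (w : W)
    (h : ∀ i : ℕ, M.Y v (n - i) w = 0) : shY M z₀ v n w = 0 := by
  rw [shY_eq_sum M z₀ v n w (K := 0) (fun i _ => h i)]; simp

lemma shY_zero_v (M : RightTwistedModule W A σ T) (z₀ : ℂ) (n : ℂ) (w : W) :
    shY M z₀ (0 : V) n w = 0 :=
  shY_eq_zero M z₀ 0 n w fun i => by rw [map_zero]; rfl

lemma shY_zero_w (M : RightTwistedModule W A σ T) (z₀ : ℂ) (v : V) (n : ℂ) :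
    shY M z₀ v n 0 = 0 :=
  shY_eq_zero M z₀ v n 0 fun i => map_zero _

lemma shY_add_w (M : RightTwistedModule W A σ T) (hT : 0 < T) (z₀ : ℂ) (v : V) (n : ℂ) (w w' : W) :
    shY M z₀ v n (w + w') = shY M z₀ v n w + shY M z₀ v n w' := by
  obtain ⟨K1, h1⟩ := ev_zero M hT v w n
  obtain ⟨K2, h2⟩ := ev_zero M hT v w' n
  rw [shY_eq_sum M z₀ v n w (K := max K1 K2) (fun i hi => h1 i (by omega)),
      shY_eq_sum M z₀ v n w' (K := max K1 K2) (fun i hi => h2 i (by omega)),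
      shY_eq_sum M z₀ v n (w + w') (K := max K1 K2)
        (fun i hi => by rw [map_add, h1 i (by omega), h2 i (by omega), add_zero]),
      ← Finset.sum_add_distrib]
  exact Finset.sum_congr rfl fun i _ => by rw [map_add, smul_add]

lemma shY_smul_w (M : RightTwistedModule W A σ T) (hT : 0 < T) (z₀ : ℂ) (v : V) (n : ℂ)
    (r : ℂ) (w : W) : shY M z₀ v n (r • w) = r • shY M z₀ v n w := by
  obtain ⟨K1, h1⟩ := ev_zero M hT v w n
  rw [shY_eq_sum M z₀ v n w (K := K1) h1,
      shY_eq_sum M z₀ v n (r • w) (K := K1)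
        (fun i hi => by rw [map_smul, h1 i hi, smul_zero]),
      Finset.smul_sum]
  exact Finset.sum_congr rfl fun i _ => by rw [map_smul, smul_comm]

lemma shY_add_v (M : RightTwistedModule W A σ T) (hT : 0 < T) (z₀ : ℂ) (v v' : V) (n : ℂ) (w : W) :
    shY M z₀ (v + v') n w = shY M z₀ v n w + shY M z₀ v' n w := by
  obtain ⟨K1, h1⟩ := ev_zero M hT v w n
  obtain ⟨K2, h2⟩ := ev_zero M hT v' w n
  have hvv : ∀ i : ℕ, M.Y (v + v') (n - i) w = M.Y v (n - i) w + M.Y v' (n - i) w := by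
    intro i; rw [map_add]; rfl
  rw [shY_eq_sum M z₀ v n w (K := max K1 K2) (fun i hi => h1 i (by omega)),
      shY_eq_sum M z₀ v' n w (K := max K1 K2) (fun i hi => h2 i (by omega)),
      shY_eq_sum M z₀ (v + v') n w (K := max K1 K2)
        (fun i hi => by rw [hvv, h1 i (by omega), h2 i (by omega), add_zero]),
      ← Finset.sum_add_distrib]
  exact Finset.sum_congr rfl fun i _ => by rw [hvv, smul_add]

lemma shY_smul_v (M : RightTwistedModule W A σ T) (hT : 0 < T) (z₀ : ℂ) (r : ℂ) (v : V)
    (n : ℂ) (w : W) : shY M z₀ (r • v) n w = r • shY M z₀ v n w := by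
  obtain ⟨K1, h1⟩ := ev_zero M hT v w n
  have hv : ∀ i : ℕ, M.Y (r • v) (n - i) w = r • M.Y v (n - i) w := by
    intro i; rw [map_smul]; rfl
  rw [shY_eq_sum M z₀ v n w (K := K1) h1,
      shY_eq_sum M z₀ (r • v) n w (K := K1)
        (fun i hi => by rw [hv, h1 i hi, smul_zero]),
      Finset.smul_sum]
  exact Finset.sum_congr rfl fun i _ => by rw [hv, smul_comm]

def shYL (M : RightTwistedModule W A σ T) (hT : 0 < T) (z₀ : ℂ) :
    V →ₗ[ℂ] ℂ → W →ₗ[ℂ] W where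
  toFun v := fun n =>
    { toFun := shY M z₀ v n
      map_add' := fun w w' => shY_add_w M hT z₀ v n w w'
      map_smul' := fun r w => shY_smul_w M hT z₀ v n r w }
  map_add' v v' := funext fun n => LinearMap.ext fun w => shY_add_v M hT z₀ v v' n w
  map_smul' r v := funext fun n => LinearMap.ext fun w => shY_smul_v M hT z₀ r v n w

@[simp] lemma shYL_apply (M : RightTwistedModule W A σ T) (hT : 0 < T) (z₀ : ℂ)
    (v : V) (n : ℂ) (w : W) : shYL M hT z₀ v n w = shY M z₀ v n w := rfl

lemma sh_vacuum (M : RightTwistedModule W A σ T) (z₀ : ℂ) (n : ℂ) (w : W) :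
    shY M z₀ A.one n w = if n = -1 then w else 0 := by
  by_cases h : n = -1
  · subst h
    have h0 : ∀ i : ℕ, i ≠ 0 → (cbinom (-1) i * (-z₀) ^ i) • M.Y A.one (-1 - i) w = 0 := by
      intro i hi
      rw [M.vacuum_eq, if_neg, smul_zero]
      intro hc
      apply hi
      have : (i : ℂ) = 0 := by linear_combination -hc
      exact_mod_cast this
    rw [shY, finsum_eq_single _ 0 h0]
    rw [M.vacuum_eq]
    norm_num [cbinom_zero]
  · rw [if_neg h]
    have hterm : ∀ i : ℕ, (cbinom n i * (-z₀) ^ i) • M.Y A.one (n - i) w = 0 := by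
      intro i
      rw [M.vacuum_eq]
      by_cases hc : n - (i : ℂ) = -1
      · have hi0 : i ≠ 0 := by
          intro h0; subst h0; apply h; simpa using hc
        have hn : n = ((i - 1 : ℕ) : ℂ) := by
          have e1 : ((i - 1 : ℕ) : ℂ) = (i : ℂ) - 1 := by
            rw [Nat.cast_sub (by omega), Nat.cast_one]
          rw [e1]
          linear_combination hc
        rw [if_pos hc, hn, cbinom_nat_lt (by omega : i - 1 < i), zero_mul, zero_smul]
      · rw [if_neg hc, smul_zero]
    rw [shY, finsum_eq_sum_range (K := 0) (fun i _ => hterm i)]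
    simp

lemma sh_latt (M : RightTwistedModule W A σ T) (hT : 0 < T) (z₀ : ℂ) (v : V) (n : ℂ)
    (hn : ∀ m : ℤ, n ≠ (m : ℂ) / (T : ℂ)) : shYL M hT z₀ v n = 0 := by
  apply LinearMap.ext
  intro w
  have : ∀ i : ℕ, M.Y v (n - i) w = 0 := by
    intro i
    have : M.Y v (n - i) = 0 := by
      apply M.latt
      intro m' hm'
      refine absurd ?_ (hn (m' + i * T))
      have hTc : (T : ℂ) ≠ 0 := Nat.cast_ne_zero.2 hT.ne'
      rw [eq_div_iff hTc] at hm' ⊢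
      push_cast
      linear_combination hm'
    rw [this]; rfl
  exact shY_eq_zero M z₀ v n w this

lemma sh_trunc (M : RightTwistedModule W A σ T) (hT : 0 < T) (z₀ : ℂ) (v : V) (w : W) :
    ∃ N : ℤ, ∀ m : ℤ, m ≤ N → shY M z₀ v ((m : ℂ) / (T : ℂ)) w = 0 := by
  obtain ⟨N, hN⟩ := M.trunc v w
  refine ⟨N, fun m hm => ?_⟩
  apply shY_eq_zero
  intro i
  have hTc : (T : ℂ) ≠ 0 := Nat.cast_ne_zero.2 hT.ne'
  have harg : (m : ℂ) / T - (i : ℕ) = ((m - i * T : ℤ) : ℂ) / T := by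
    push_cast; field_simp
  rw [harg]
  apply hN
  have : (0 : ℤ) ≤ (i : ℤ) * T := mul_nonneg (Int.ofNat_nonneg i) (by exact_mod_cast Nat.zero_le T)
  omega

end Mod2

section Jac
variable {V : Type*} [AddCommGroup V] [Module ℂ V] {W : Type*} [AddCommGroup W] [Module ℂ W]
  {A : VertexAlg V} {σ : VAAut A} {T : ℕ}

open Finset

lemma csub (x : ℂ) (i l : ℕ) : x - (i : ℂ) - (l : ℂ) = x - ((i + l : ℕ) : ℂ) := by
  push_cast; ring

lemma sh_jacobi (M : RightTwistedModule W A σ T) (hT : 0 < T) (z₀ : ℂ)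
    (j : ℤ) (u : V) (hu : eig σ T j u) (v : V) (w : W) (a b c : ℤ) :
    (∑ᶠ i : ℕ, ((-1 : ℂ) ^ i * cbinom (a : ℂ) i) •
      (shY M z₀ v ((c : ℂ) / (T : ℂ) + (i : ℂ))
          (shY M z₀ u ((a : ℂ) + (b : ℂ) / (T : ℂ) - (i : ℂ)) w)
        - ((-1 : ℂ) ^ a) •
          shY M z₀ u ((b : ℂ) / (T : ℂ) + (i : ℂ))
            (shY M z₀ v ((a : ℂ) + (c : ℂ) / (T : ℂ) - (i : ℂ)) w)))
    = if (T : ℤ) ∣ (b + j) then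
        (∑ᶠ i : ℕ, cbinom ((b : ℂ) / (T : ℂ)) i •
          shY M z₀ (A.Y u (a + (i : ℤ)) v) ((b : ℂ) / (T : ℂ) + (c : ℂ) / (T : ℂ) - (i : ℂ)) w)
      else 0 := by
  have hTc : (T : ℂ) ≠ 0 := Nat.cast_ne_zero.2 hT.ne'
  set β : ℂ := (b : ℂ) / (T : ℂ) with hβ
  set γ : ℂ := (c : ℂ) / (T : ℂ) with hγ
  set ζ : ℂ := -z₀ with hζ
  set e : ℂ := (-1 : ℂ) ^ a with he
  -- bounds
  obtain ⟨KA, hKA⟩ := ev_zero M hT u w ((a : ℂ) + β)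
  obtain ⟨KB, hKB⟩ := ev_zero M hT v w ((a : ℂ) + γ)
  set E : ℕ := max KA KB with hE
  have hE1 : ∀ s : ℕ, E ≤ s → M.Y u ((a : ℂ) + β - s) w = 0 := fun s hs => hKA s (by omega)
  have hE2 : ∀ s : ℕ, E ≤ s → M.Y v ((a : ℂ) + γ - s) w = 0 := fun s hs => hKB s (by omega)
  choose FA hFA using fun (q : ℕ × ℕ) =>
    ev_zero M hT v (M.Y u ((a : ℂ) + β - q.2) w) (γ + q.1)
  choose FB hFB using fun (q : ℕ × ℕ) =>
    ev_zero M hT u (M.Y v ((a : ℂ) + γ - q.2) w) (β + q.1)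
  obtain ⟨Na, hNa⟩ := A.trunc u v
  set I : ℕ := (Na - a).toNat with hI
  have hIz : ∀ i : ℕ, I ≤ i → A.Y u (a + (i : ℤ)) v = 0 := by
    intro i hi
    apply hNa
    have : (Na - a) ≤ (i : ℤ) := le_trans (Int.self_le_toNat _) (by exact_mod_cast hi)
    omega
  choose FR hFR using fun (i : ℕ) => ev_zero M hT (A.Y u (a + (i : ℤ)) v) w (β + γ)
  set D : ℕ := max E (max ((Finset.range E ×ˢ Finset.range E).sup FA)
      (max ((Finset.range E ×ˢ Finset.range E).sup FB) ((Finset.range I).sup FR))) with hD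
  have hED : E ≤ D := le_max_left _ _
  have hD1 : ∀ i s k : ℕ, i < E → D ≤ k → M.Y v (γ + i - k) (M.Y u ((a : ℂ) + β - s) w) = 0 := by
    intro i s k hi hk
    by_cases hs : s < E
    · apply hFA (i, s)
      have : FA (i, s) ≤ D := le_trans (Finset.le_sup (Finset.mem_product.2
        ⟨Finset.mem_range.2 hi, Finset.mem_range.2 hs⟩)) (by omega)
      omega
    · rw [hE1 s (by omega), map_zero]
  have hD2 : ∀ i s k : ℕ, i < E → D ≤ k → M.Y u (β + i - k) (M.Y v ((a : ℂ) + γ - s) w) = 0 := by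
    intro i s k hi hk
    by_cases hs : s < E
    · apply hFB (i, s)
      have : FB (i, s) ≤ D := le_trans (Finset.le_sup (Finset.mem_product.2
        ⟨Finset.mem_range.2 hi, Finset.mem_range.2 hs⟩)) (by omega)
      omega
    · rw [hE2 s (by omega), map_zero]
  have hDR : ∀ i k : ℕ, i < I → D ≤ k → M.Y (A.Y u (a + (i : ℤ)) v) (β + γ - ((i + k : ℕ) : ℂ)) w = 0 := by
    intro i k hi hk
    apply hFR i
    have : FR i ≤ D := le_trans (Finset.le_sup (Finset.mem_range.2 hi)) (by omega)
    omega
  -- expand the two compositions for i < E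
  have expandA : ∀ i : ℕ, i < E →
      shY M z₀ v (γ + (i : ℂ)) (shY M z₀ u ((a : ℂ) + β - (i : ℂ)) w)
      = ∑ k ∈ Finset.range D, (cbinom (γ + (i : ℂ)) k * ζ ^ k) •
          M.Y v (γ + (i : ℂ) - (k : ℂ))
            (∑ l ∈ Finset.range E, (cbinom ((a : ℂ) + β - (i : ℂ)) l * ζ ^ l) •
              M.Y u ((a : ℂ) + β - (i : ℂ) - (l : ℂ)) w) := by
    intro i hi
    have hin : shY M z₀ u ((a : ℂ) + β - (i : ℂ)) w
        = ∑ l ∈ Finset.range E, (cbinom ((a : ℂ) + β - (i : ℂ)) l * ζ ^ l) •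
            M.Y u ((a : ℂ) + β - (i : ℂ) - (l : ℂ)) w :=
      shY_eq_sum M z₀ u _ w (fun l hl => by rw [csub, hE1 (i + l) (by omega)])
    rw [hin]
    exact shY_eq_sum M z₀ v _ _ (fun k hk => by
      rw [map_sum]
      refine Finset.sum_eq_zero fun l _ => ?_
      rw [map_smul, csub ((a : ℂ) + β) i l, hD1 i (i + l) k hi hk, smul_zero])
  have expandB : ∀ i : ℕ, i < E →
      shY M z₀ u (β + (i : ℂ)) (shY M z₀ v ((a : ℂ) + γ - (i : ℂ)) w)
      = ∑ k ∈ Finset.range D, (cbinom (β + (i : ℂ)) k * ζ ^ k) •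
          M.Y u (β + (i : ℂ) - (k : ℂ))
            (∑ l ∈ Finset.range E, (cbinom ((a : ℂ) + γ - (i : ℂ)) l * ζ ^ l) •
              M.Y v ((a : ℂ) + γ - (i : ℂ) - (l : ℂ)) w) := by
    intro i hi
    have hin : shY M z₀ v ((a : ℂ) + γ - (i : ℂ)) w
        = ∑ l ∈ Finset.range E, (cbinom ((a : ℂ) + γ - (i : ℂ)) l * ζ ^ l) •
            M.Y v ((a : ℂ) + γ - (i : ℂ) - (l : ℂ)) w :=
      shY_eq_sum M z₀ v _ w (fun l hl => by rw [csub, hE2 (i + l) (by omega)])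
    rw [hin]
    exact shY_eq_sum M z₀ u _ _ (fun k hk => by
      rw [map_sum]
      refine Finset.sum_eq_zero fun l _ => ?_
      rw [map_smul, csub ((a : ℂ) + γ) i l, hD2 i (i + l) k hi hk, smul_zero])
  -- the left-hand side as a finite sum
  have hLHS1 : (∑ᶠ i : ℕ, ((-1 : ℂ) ^ i * cbinom (a : ℂ) i) •
      (shY M z₀ v (γ + (i : ℂ)) (shY M z₀ u ((a : ℂ) + β - (i : ℂ)) w)
        - e • shY M z₀ u (β + (i : ℂ)) (shY M z₀ v ((a : ℂ) + γ - (i : ℂ)) w)))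
      = ∑ i ∈ Finset.range E, ((-1 : ℂ) ^ i * cbinom (a : ℂ) i) •
      (shY M z₀ v (γ + (i : ℂ)) (shY M z₀ u ((a : ℂ) + β - (i : ℂ)) w)
        - e • shY M z₀ u (β + (i : ℂ)) (shY M z₀ v ((a : ℂ) + γ - (i : ℂ)) w)) :=
    finsum_eq_sum_range (fun i hi => by
      rw [shY_eq_zero M z₀ u ((a : ℂ) + β - (i : ℂ)) w
            (fun l => by rw [csub, hE1 (i + l) (by omega)]),
          shY_eq_zero M z₀ v ((a : ℂ) + γ - (i : ℂ)) w
            (fun l => by rw [csub, hE2 (i + l) (by omega)]),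
          shY_zero_w, shY_zero_w, smul_zero, sub_zero, smul_zero])
  set SA : ℕ → ℕ → W := fun m p => ∑ i ∈ Finset.range E, ((-1 : ℂ) ^ i * cbinom (a : ℂ) i) •
      M.Y v (γ - (p : ℂ) + (i : ℂ)) (M.Y u ((a : ℂ) + β - (m : ℂ) - (i : ℂ)) w) with hSA
  set SB : ℕ → ℕ → W := fun m p => ∑ i ∈ Finset.range E, ((-1 : ℂ) ^ i * cbinom (a : ℂ) i) •
      M.Y u (β - (p : ℂ) + (i : ℂ)) (M.Y v ((a : ℂ) + γ - (m : ℂ) - (i : ℂ)) w) with hSB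
  have coreA := coreF (M.Y v) (M.Y u) w (a : ℂ) γ β ζ hED hE1 hD1
  have coreB := coreF (M.Y u) (M.Y v) w (a : ℂ) β γ ζ hED hE2 hD2
  have hSA0 : ∀ m p : ℕ, E ≤ m → SA m p = 0 := by
    intro m p hm
    refine Finset.sum_eq_zero fun i _ => ?_
    rw [csub ((a : ℂ) + β) m i, hE1 (m + i) (by omega), map_zero, smul_zero]
  have hSB0 : ∀ m p : ℕ, E ≤ m → SB m p = 0 := by
    intro m p hm
    refine Finset.sum_eq_zero fun i _ => ?_
    rw [csub ((a : ℂ) + γ) m i, hE2 (m + i) (by omega), map_zero, smul_zero]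
  have step1 : ∑ i ∈ Finset.range E, ((-1 : ℂ) ^ i * cbinom (a : ℂ) i) •
      (shY M z₀ v (γ + (i : ℂ)) (shY M z₀ u ((a : ℂ) + β - (i : ℂ)) w)
        - e • shY M z₀ u (β + (i : ℂ)) (shY M z₀ v ((a : ℂ) + γ - (i : ℂ)) w))
      = ∑ m ∈ Finset.range D, ∑ p ∈ Finset.range D,
          (cbinom β m * cbinom γ p * ζ ^ (m + p)) • (SA m p - e • SB p m) := by
    calc ∑ i ∈ Finset.range E, ((-1 : ℂ) ^ i * cbinom (a : ℂ) i) •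
        (shY M z₀ v (γ + (i : ℂ)) (shY M z₀ u ((a : ℂ) + β - (i : ℂ)) w)
          - e • shY M z₀ u (β + (i : ℂ)) (shY M z₀ v ((a : ℂ) + γ - (i : ℂ)) w))
        = ∑ i ∈ Finset.range E,
            (((-1 : ℂ) ^ i * cbinom (a : ℂ) i) •
              (∑ k ∈ Finset.range D, (cbinom (γ + (i : ℂ)) k * ζ ^ k) •
                M.Y v (γ + (i : ℂ) - (k : ℂ))
                  (∑ l ∈ Finset.range E, (cbinom ((a : ℂ) + β - (i : ℂ)) l * ζ ^ l) •
                    M.Y u ((a : ℂ) + β - (i : ℂ) - (l : ℂ)) w))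
            - e • (((-1 : ℂ) ^ i * cbinom (a : ℂ) i) •
              (∑ k ∈ Finset.range D, (cbinom (β + (i : ℂ)) k * ζ ^ k) •
                M.Y u (β + (i : ℂ) - (k : ℂ))
                  (∑ l ∈ Finset.range E, (cbinom ((a : ℂ) + γ - (i : ℂ)) l * ζ ^ l) •
                    M.Y v ((a : ℂ) + γ - (i : ℂ) - (l : ℂ)) w)))) := by
          refine Finset.sum_congr rfl fun i hi => ?_
          rw [expandA i (Finset.mem_range.1 hi), expandB i (Finset.mem_range.1 hi),
            smul_sub, smul_comm]
      _ = (∑ m ∈ Finset.range E, ∑ p ∈ Finset.range D,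
            (cbinom β m * cbinom γ p * ζ ^ (m + p)) • SA m p)
          - e • (∑ m ∈ Finset.range E, ∑ p ∈ Finset.range D,
            (cbinom γ m * cbinom β p * ζ ^ (m + p)) • SB m p) := by
          rw [Finset.sum_sub_distrib, ← Finset.smul_sum, coreA, coreB]
      _ = (∑ m ∈ Finset.range D, ∑ p ∈ Finset.range D,
            (cbinom β m * cbinom γ p * ζ ^ (m + p)) • SA m p)
          - e • (∑ m ∈ Finset.range D, ∑ p ∈ Finset.range D,
            (cbinom γ m * cbinom β p * ζ ^ (m + p)) • SB m p) := by
          rw [sum_range_ext hED (f := fun m => ∑ p ∈ Finset.range D,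
              (cbinom β m * cbinom γ p * ζ ^ (m + p)) • SA m p)
            (fun m hm => Finset.sum_eq_zero fun p _ => by rw [hSA0 m p hm, smul_zero]),
            sum_range_ext hED (f := fun m => ∑ p ∈ Finset.range D,
              (cbinom γ m * cbinom β p * ζ ^ (m + p)) • SB m p)
            (fun m hm => Finset.sum_eq_zero fun p _ => by rw [hSB0 m p hm, smul_zero])]
      _ = (∑ m ∈ Finset.range D, ∑ p ∈ Finset.range D,
            (cbinom β m * cbinom γ p * ζ ^ (m + p)) • SA m p)
          - e • (∑ m ∈ Finset.range D, ∑ p ∈ Finset.range D,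
            (cbinom γ p * cbinom β m * ζ ^ (p + m)) • SB p m) := by
          rw [Finset.sum_comm
            (f := fun m p => (cbinom γ m * cbinom β p * ζ ^ (m + p)) • SB m p)]
      _ = ∑ m ∈ Finset.range D, ∑ p ∈ Finset.range D,
            (cbinom β m * cbinom γ p * ζ ^ (m + p)) • (SA m p - e • SB p m) := by
          rw [Finset.smul_sum, ← Finset.sum_sub_distrib]
          refine Finset.sum_congr rfl fun m _ => ?_
          rw [Finset.smul_sum, ← Finset.sum_sub_distrib]
          refine Finset.sum_congr rfl fun p _ => ?_
          rw [smul_sub, smul_smul, smul_smul]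
          congr 2
          ring
  rw [hLHS1, step1]
  have jac : ∀ m p : ℕ, SA m p - e • SB p m
      = if (T : ℤ) ∣ (b + j) then
          ∑ i ∈ Finset.range I, cbinom (β - (m : ℂ)) i •
            M.Y (A.Y u (a + (i : ℤ)) v) (β + γ - ((i + (m + p) : ℕ) : ℂ)) w
        else 0 := by
    intro m p
    have J := M.jacobi j u hu v w a (b - (m : ℤ) * (T : ℤ)) (c - (p : ℤ) * (T : ℤ))
    have hbm : (((b - (m : ℤ) * (T : ℤ)) : ℤ) : ℂ) / (T : ℂ) = β - (m : ℂ) := by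
      rw [hβ]; push_cast; field_simp
    have hcp : (((c - (p : ℤ) * (T : ℤ)) : ℤ) : ℂ) / (T : ℂ) = γ - (p : ℂ) := by
      rw [hγ]; push_cast; field_simp
    have hdvd : ((T : ℤ) ∣ (b - (m : ℤ) * T) + j) = ((T : ℤ) ∣ b + j) := by
      apply propext
      constructor
      · intro h
        have h2 := dvd_add h (dvd_mul_right (T : ℤ) (m : ℤ))
        rw [show b - (m : ℤ) * T + j + T * m = b + j from by ring] at h2
        exact h2
      · intro h
        have h2 := dvd_sub h (dvd_mul_right (T : ℤ) (m : ℤ))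
        rw [show b + j - T * m = b - (m : ℤ) * T + j from by ring] at h2
        exact h2
    rw [hbm, hcp, ← he] at J
    simp only [hdvd] at J
    have JL : (∑ᶠ i : ℕ, ((-1 : ℂ) ^ i * cbinom (a : ℂ) i) •
        (M.Y v (γ - (p : ℂ) + (i : ℂ)) (M.Y u ((a : ℂ) + (β - (m : ℂ)) - (i : ℂ)) w)
          - e • M.Y u (β - (m : ℂ) + (i : ℂ)) (M.Y v ((a : ℂ) + (γ - (p : ℂ)) - (i : ℂ)) w)))
        = SA m p - e • SB p m := by
      rw [finsum_eq_sum_range (K := E) (fun i hi => by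
        rw [show (a : ℂ) + (β - (m : ℂ)) - (i : ℂ) = (a : ℂ) + β - ((m + i : ℕ) : ℂ) from by
              push_cast; ring,
            hE1 (m + i) (by omega), map_zero,
            show (a : ℂ) + (γ - (p : ℂ)) - (i : ℂ) = (a : ℂ) + γ - ((p + i : ℕ) : ℂ) from by
              push_cast; ring,
            hE2 (p + i) (by omega), map_zero, smul_zero, zero_sub, neg_zero, smul_zero])]
      have e1 : ∀ i ∈ Finset.range E, ((-1 : ℂ) ^ i * cbinom (a : ℂ) i) •
          (M.Y v (γ - (p : ℂ) + (i : ℂ)) (M.Y u ((a : ℂ) + (β - (m : ℂ)) - (i : ℂ)) w)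
            - e • M.Y u (β - (m : ℂ) + (i : ℂ)) (M.Y v ((a : ℂ) + (γ - (p : ℂ)) - (i : ℂ)) w))
          = ((-1 : ℂ) ^ i * cbinom (a : ℂ) i) •
              M.Y v (γ - (p : ℂ) + (i : ℂ)) (M.Y u ((a : ℂ) + β - (m : ℂ) - (i : ℂ)) w)
            - e • (((-1 : ℂ) ^ i * cbinom (a : ℂ) i) •
              M.Y u (β - (m : ℂ) + (i : ℂ)) (M.Y v ((a : ℂ) + γ - (p : ℂ) - (i : ℂ)) w)) := by
        intro i _
        rw [show (a : ℂ) + (β - (m : ℂ)) - (i : ℂ) = (a : ℂ) + β - (m : ℂ) - (i : ℂ) from by ring,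
            show (a : ℂ) + (γ - (p : ℂ)) - (i : ℂ) = (a : ℂ) + γ - (p : ℂ) - (i : ℂ) from by ring,
            smul_sub, smul_comm]
      rw [Finset.sum_congr rfl e1, Finset.sum_sub_distrib, ← Finset.smul_sum]
    rw [← JL, J]
    by_cases h : (T : ℤ) ∣ b + j
    · rw [if_pos h, if_pos h]
      rw [finsum_eq_sum_range (K := I) (fun i hi => by
        rw [hIz i hi, map_zero]
        simp)]
      refine Finset.sum_congr rfl fun i _ => ?_
      rw [show β - (m : ℂ) + (γ - (p : ℂ)) - (i : ℂ) = β + γ - ((i + (m + p) : ℕ) : ℂ) from by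
        push_cast; ring]
    · rw [if_neg h, if_neg h]
  by_cases hcond : (T : ℤ) ∣ b + j
  · rw [if_pos hcond]
    set Z : ℕ → ℕ → W := fun i s => M.Y (A.Y u (a + (i : ℤ)) v) (β + γ - (s : ℂ)) w with hZdef
    have hgoalR : (∑ᶠ i : ℕ, cbinom β i • shY M z₀ (A.Y u (a + (i : ℤ)) v) (β + γ - (i : ℂ)) w)
        = ∑ i ∈ Finset.range I, cbinom β i •
            ∑ k ∈ Finset.range D, (cbinom (β + γ - (i : ℂ)) k * ζ ^ k) • Z i (i + k) := by
      rw [finsum_eq_sum_range (K := I) (fun i hi => by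
        rw [hIz i hi, shY_zero_v, smul_zero])]
      refine Finset.sum_congr rfl fun i hi => ?_
      congr 1
      rw [shY_eq_sum M z₀ _ _ w (K := D) (fun k hk => by
        rw [csub (β + γ) i k]
        exact hDR i k (Finset.mem_range.1 hi) hk)]
      refine Finset.sum_congr rfl fun k _ => ?_
      rw [csub (β + γ) i k]
    rw [hgoalR, coreR β γ ζ Z (fun i k hi hk => hDR i k hi hk)]
    refine Finset.sum_congr rfl fun m _ => Finset.sum_congr rfl fun p _ => ?_
    rw [jac m p, if_pos hcond]
  · rw [if_neg hcond]
    refine Finset.sum_eq_zero fun m _ => Finset.sum_eq_zero fun p _ => ?_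
    rw [jac m p, if_neg hcond, smul_zero]

end Jac

/-- If `(W, Y_W)` is a right `σ`-twisted `V`-module and `z₀ ∈ ℂ`, then
`(W, Y_W^{(z₀)})`, where `Y_W^{(z₀)}(v,x) = Y_W(v, x+z₀) = e^{z₀ d/dx} Y_W(v,x)`, is again
a right `σ`-twisted `V`-module.  (Componentwise, the coefficient of `x^{-n-1}` in
`Y_W(v, x+z₀)` is `Σ_{i≥0} binom(i-n-1, i) z₀^i (Y_W v)_{n-i}`.) -/
theorem rightTwisted_shift
    (V : Type*) [AddCommGroup V] [Module ℂ V] (W : Type*) [AddCommGroup W] [Module ℂ W]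
    (A : VertexAlg V) (σ : VAAut A) (T : ℕ) (hT : 0 < T)
    (hord : ∀ v : V, (⇑σ.g)^[T] v = v)
    (M : RightTwistedModule W A σ T) (z₀ : ℂ) :
    ∃ M' : RightTwistedModule W A σ T, ∀ (v : V) (n : ℂ) (w : W),
      M'.Y v n w = ∑ᶠ i : ℕ, (cbinom ((i : ℂ) - n - 1) i * z₀ ^ i) • M.Y v (n - (i : ℂ)) w := by
  refine ⟨{ Y := shYL M hT z₀
            vacuum_eq := fun n w => sh_vacuum M z₀ n w
            latt := fun v n hn => sh_latt M hT z₀ v n hn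
            trunc := fun v w => sh_trunc M hT z₀ v w
            jacobi := fun j u hu v w a b c => sh_jacobi M hT z₀ j u hu v w a b c }, ?_⟩
  intro v n w
  show shY M z₀ v n w = _
  unfold shY
  exact finsum_congr fun i => by
    rw [cbinom_reflect]
    congr 1
    ring
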